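/- (One-step expected contraction of proximal block coordinate descent, eq. (cdprooffinal).) For any w ∈ ℝ^{K(K−1)/2} with w ≥ 0, the average of the objective over all possible single block updates satisfies (1/|B|)·Σ_{b∈B} h(T_b(w)) − h(w*) ≤ ( 1 − 2κσ/(K(K−1)·L_max) )·( h(w) − h(w*) ). -/

import Mathlib

open scoped RealInnerProductSpace BigOperators

/-- Coordinates are indexed by unordered pairs of distinct elements of `[K]`,
represented as ordered pairs `(i,j)` with `i < j`; there are `K(K−1)/2` of them. -/
abbrev PairIdx (K : ℕ) := {q : Fin K × Fin K // q.1 < q.2}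

/-- Weight vectors live in `ℝ^{K(K−1)/2}` with the Euclidean structure. -/
abbrev GVec (K : ℕ) := EuclideanSpace ℝ (PairIdx K)

/-- A block `b = (k, 𝒦)` with `k ∈ [K]`, `𝒦 ⊆ [K]\{k}`, `|𝒦| = κ`. -/
abbrev Blk (K κ : ℕ) := {b : Fin K × Finset (Fin K) // b.1 ∉ b.2 ∧ b.2.card = κ}

/-- The coordinate `{i,j}` belongs to block `(k,𝒦)` iff it is of the form `{k,l}`, `l ∈ 𝒦`. -/
def inBlock {K κ : ℕ} (b : Blk K κ) (q : PairIdx K) : Prop :=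
  (q.1.1 = b.1.1 ∧ q.1.2 ∈ b.1.2) ∨ (q.1.2 = b.1.1 ∧ q.1.1 ∈ b.1.2)

instance {K κ : ℕ} (b : Blk K κ) (q : PairIdx K) : Decidable (inBlock b q) := by
  unfold inBlock; infer_instance

/-- The block proximal-gradient update `T_b(w)`: on the coordinates of block `b` it equals
`max(0, [w]_b − (1/L_b)[∇h(w)]_b)`, and it agrees with `w` outside block `b`. -/
noncomputable def blockProxUpdate {K κ : ℕ} (h : GVec K → ℝ) (L : Blk K κ → ℝ)
    (b : Blk K κ) (w : GVec K) : GVec K :=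
  WithLp.toLp 2 fun q => if inBlock b q then max 0 (w q - (1 / L b) * gradient h w q) else w q

/-- Per-coordinate optimality of the projected prox step for the quadratic model. -/
lemma coord_quad_min (wq g Lb z : ℝ) (hL : 0 < Lb) (hz : -wq ≤ z) :
    (max 0 (wq - (1/Lb) * g) - wq) * g + Lb / 2 * (max 0 (wq - (1/Lb) * g) - wq)^2
      ≤ z * g + Lb / 2 * z^2 := by
  rcases le_total (wq - (1/Lb) * g) 0 with hc | hc
  · rw [max_eq_left hc]
    have hg : Lb * wq ≤ g := by
      have := mul_le_mul_of_nonneg_left (by linarith : wq ≤ (1/Lb) * g) hL.le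
      field_simp at this; nlinarith
    nlinarith [mul_nonneg (by linarith : (0:ℝ) ≤ z + wq)
      (by nlinarith : (0:ℝ) ≤ g - Lb*wq + Lb/2*(z+wq))]
  · rw [max_eq_right hc]
    have h1 : (wq - (1/Lb)*g - wq) = -(g/Lb) := by field_simp; ring
    rw [h1]
    have h2 : z * g + Lb/2 * z^2 - (-(g/Lb) * g + Lb/2 * (-(g/Lb))^2) = Lb/2 * (z + g/Lb)^2 := by
      field_simp; ring
    nlinarith [sq_nonneg (z + g/Lb)]

/-- Inner product on `GVec` as a sum. -/
lemma gvec_inner {K : ℕ} (x y : GVec K) : ⟪x, y⟫ = ∑ q, x q * y q := by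
  simp [PiLp.inner_apply, RCLike.inner_apply, conj_trivial]
  exact Finset.sum_congr rfl (fun _ _ => mul_comm _ _)

lemma gvec_norm_sq {K : ℕ} (x : GVec K) : ‖x‖^2 = ∑ q, (x q)^2 := by
  rw [← real_inner_self_eq_norm_sq]
  rw [gvec_inner]; simp only [sq]

/-- Key one-block bound: the prox update beats any feasible competitor on the block model. -/
lemma key_block {K κ : ℕ} (h : GVec K → ℝ) (L : Blk K κ → ℝ) (hLpos : ∀ b, 0 < L b)
    (hsmooth : ∀ (b : Blk K κ) (w z : GVec K), (∀ q, ¬ inBlock b q → z q = 0) →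
      h (w + z) ≤ h w + ⟪z, gradient h w⟫ + L b / 2 * ‖z‖ ^ 2)
    (b : Blk K κ) (w u : GVec K) (hu : ∀ q, -w q ≤ u q) :
    h (blockProxUpdate h L b w) ≤ h w +
      ∑ q ∈ Finset.univ.filter (fun q => inBlock b q),
        (u q * gradient h w q + L b / 2 * (u q)^2) := by
  set g := gradient h w with hg
  set d : GVec K := WithLp.toLp 2 fun q => if inBlock b q then max 0 (w q - (1 / L b) * g q) - w q else 0 with hd
  have hTd : blockProxUpdate h L b w = w + d := by
    ext q
    show _ = w q + d q
    simp only [blockProxUpdate, hd, PiLp.toLp_apply]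
    split <;> ring
  have hsupp : ∀ q, ¬ inBlock b q → d q = 0 := by intro q hq; simp [hd, hq]
  have h1 := hsmooth b w d hsupp
  rw [← hTd] at h1
  refine h1.trans ?_
  have h2 : ⟪d, g⟫ + L b / 2 * ‖d‖^2 = ∑ q, (d q * g q + L b / 2 * (d q)^2) := by
    rw [gvec_inner, gvec_norm_sq, Finset.mul_sum, ← Finset.sum_add_distrib]
  rw [add_assoc, h2]
  gcongr
  rw [← Finset.sum_filter_add_sum_filter_not Finset.univ (fun q => inBlock b q)
    (fun q => d q * g q + L b / 2 * (d q)^2)]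
  have h3 : ∑ q ∈ Finset.univ.filter (fun q => ¬ inBlock b q),
      (d q * g q + L b / 2 * (d q)^2) = 0 := by
    apply Finset.sum_eq_zero
    intro q hq
    rw [Finset.mem_filter] at hq
    rw [hsupp q hq.2]; ring
  rw [h3, add_zero]
  apply Finset.sum_le_sum
  intro q hq
  rw [Finset.mem_filter] at hq
  have : d q = max 0 (w q - (1 / L b) * g q) - w q := by simp [hd, hq.2]
  rw [this]
  exact coord_quad_min (w q) (g q) (L b) (u q) (hLpos b) (hu q)

/-- Counting κ-subsets avoiding `a` and containing `c`. -/
lemma card_filter_blk {K κ : ℕ} (hκ1 : 1 ≤ κ) (a c : Fin K) (hac : a ≠ c) :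
    (Finset.univ.filter (fun b : Blk K κ => a = b.1.1 ∧ c ∈ b.1.2)).card
      = (K - 2).choose (κ - 1) := by
  have hcard : (((Finset.univ : Finset (Fin K)).erase a).erase c).card = K - 2 := by
    rw [Finset.card_erase_of_mem (Finset.mem_erase.2 ⟨hac.symm, Finset.mem_univ c⟩),
      Finset.card_erase_of_mem (Finset.mem_univ a), Finset.card_univ, Fintype.card_fin]
    omega
  rw [← hcard, ← Finset.card_powersetCard]
  apply Finset.card_bij' (fun b _ => b.1.2.erase c)
    (fun t ht => (⟨(a, insert c t), by
      simp only [Finset.mem_powersetCard] at ht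
      have hct : c ∉ t := fun hc => (Finset.mem_erase.1 (ht.1 hc)).1 rfl
      refine ⟨?_, ?_⟩
      · simp only [Finset.mem_insert]
        rintro (rfl | hat)
        · exact hac rfl
        · exact (Finset.mem_erase.1 (Finset.mem_erase.1 (ht.1 hat)).2).1 rfl
      · rw [Finset.card_insert_of_notMem hct, ht.2]; omega⟩ : Blk K κ))
  case hi =>
    intro b hb
    simp only [Finset.mem_filter] at hb
    obtain ⟨-, heq, hcb⟩ := hb
    simp only [Finset.mem_powersetCard]
    constructor
    · intro x hx
      rw [Finset.mem_erase] at hx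
      rw [Finset.mem_erase]
      refine ⟨hx.1, Finset.mem_erase.2 ⟨fun hxa => b.2.1 (heq ▸ hxa ▸ hx.2), Finset.mem_univ x⟩⟩
    · rw [Finset.card_erase_of_mem hcb, b.2.2]
  case hj =>
    intro t ht
    simp only [Finset.mem_filter]
    refine ⟨Finset.mem_univ _, ?_, Finset.mem_insert_self c t⟩
    first | rfl | trivial
  case left_inv =>
    intro b hb
    simp only [Finset.mem_filter] at hb
    apply Subtype.ext
    apply Prod.ext
    · exact hb.2.1
    · exact Finset.insert_erase hb.2.2
  case right_inv =>
    intro t ht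
    simp only [Finset.mem_powersetCard] at ht
    have hct : c ∉ t := fun hc => (Finset.mem_erase.1 (ht.1 hc)).1 rfl
    exact Finset.erase_insert hct

/-- Number of blocks containing a fixed coordinate. -/
lemma count_inBlock {K κ : ℕ} (hκ1 : 1 ≤ κ) (q : PairIdx K) :
    (Finset.univ.filter (fun b : Blk K κ => inBlock b q)).card
      = 2 * (K - 2).choose (κ - 1) := by
  have hne : q.1.1 ≠ q.1.2 := ne_of_lt q.2
  have hsplit : Finset.univ.filter (fun b : Blk K κ => inBlock b q)
      = Finset.univ.filter (fun b : Blk K κ => q.1.1 = b.1.1 ∧ q.1.2 ∈ b.1.2)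
        ∪ Finset.univ.filter (fun b : Blk K κ => q.1.2 = b.1.1 ∧ q.1.1 ∈ b.1.2) := by
    rw [← Finset.filter_or]
    apply Finset.filter_congr
    intro b _
    rfl
  rw [hsplit, Finset.card_union_of_disjoint, card_filter_blk hκ1 _ _ hne,
    card_filter_blk hκ1 _ _ hne.symm]
  · ring
  · rw [Finset.disjoint_filter]
    rintro b _ ⟨h1, -⟩ ⟨h2, -⟩
    exact hne (h1.trans h2.symm)

/-- Total number of blocks. -/
lemma card_blk {K κ : ℕ} : Fintype.card (Blk K κ) = K * (K - 1).choose κ := by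
  rw [Fintype.card_subtype]
  rw [Finset.card_eq_sum_card_fiberwise
    (f := fun b : Fin K × Finset (Fin K) => b.1) (t := Finset.univ)
    (fun x _ => Finset.mem_univ _)]
  have hstep : ∀ k : Fin K,
      ((Finset.univ.filter (fun b : Fin K × Finset (Fin K) => b.1 ∉ b.2 ∧ b.2.card = κ)).filter
        (fun b => b.1 = k)).card = (K - 1).choose κ := by
    intro k
    have hcard : (((Finset.univ : Finset (Fin K)).erase k)).card = K - 1 := by
      rw [Finset.card_erase_of_mem (Finset.mem_univ k), Finset.card_univ, Fintype.card_fin]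
    rw [← hcard, ← Finset.card_powersetCard]
    apply Finset.card_bij' (fun b _ => b.2) (fun t _ => (k, t))
    case hi =>
      intro b hb
      simp only [Finset.mem_filter] at hb
      obtain ⟨⟨-, hk, hc⟩, hk2⟩ := hb
      simp only [Finset.mem_powersetCard]
      exact ⟨fun x hx => Finset.mem_erase.2 ⟨fun hxk => hk ((hk2 ▸ hxk) ▸ hx), Finset.mem_univ x⟩, hc⟩
    case hj =>
      intro t ht
      simp only [Finset.mem_powersetCard] at ht
      simp only [Finset.mem_filter]
      refine ⟨⟨Finset.mem_univ _, fun hk => (Finset.mem_erase.1 (ht.1 hk)).1 rfl, ht.2⟩, ?_⟩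
      first | rfl | trivial
    case left_inv =>
      intro b hb
      simp only [Finset.mem_filter] at hb
      rw [← hb.2]
    case right_inv =>
      intro t _
      rfl
  rw [Finset.sum_congr rfl (fun k _ => hstep k), Finset.sum_const, Finset.card_univ,
    Fintype.card_fin, smul_eq_mul]

/-- One-step expected contraction of proximal block coordinate descent
(eq. (cdprooffinal)): for any `w ≥ 0`,
`(1/|B|) Σ_{b∈B} h(T_b(w)) − h(w*) ≤ (1 − 2κσ/(K(K−1)L_max)) (h(w) − h(w*))`. -/
theorem block_coordinate_descent_one_step_contraction
    (K κ : ℕ) (hK : 2 ≤ K) (hκ1 : 1 ≤ κ) (hκ2 : κ ≤ K - 1)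
    (h : GVec K → ℝ) (hdiff : Differentiable ℝ h)
    (σ : ℝ) (hσ : 0 < σ)
    (hsc : ∀ w z : GVec K, h w + ⟪z - w, gradient h w⟫ + σ / 2 * ‖z - w‖ ^ 2 ≤ h z)
    (L : Blk K κ → ℝ) (hLpos : ∀ b, 0 < L b)
    (hsmooth : ∀ (b : Blk K κ) (w z : GVec K), (∀ q, ¬ inBlock b q → z q = 0) →
      h (w + z) ≤ h w + ⟪z, gradient h w⟫ + L b / 2 * ‖z‖ ^ 2)
    (Lmax : ℝ) (hLmax : ∀ b, L b ≤ Lmax)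
    (wstar : GVec K) (hwstar_nonneg : ∀ q, 0 ≤ wstar q)
    (hwstar_min : ∀ z : GVec K, (∀ q, 0 ≤ z q) → h wstar ≤ h z)
    (w : GVec K) (hw_nonneg : ∀ q, 0 ≤ w q) :
    (Fintype.card (Blk K κ) : ℝ)⁻¹ * (∑ b : Blk K κ, h (blockProxUpdate h L b w)) - h wstar
      ≤ (1 - 2 * κ * σ / (K * ((K : ℝ) - 1) * Lmax)) * (h w - h wstar) := by
  -- existence of a block and σ ≤ Lmax
  have hK0 : 0 < K := by omega
  obtain ⟨𝒦0, h𝒦0sub, h𝒦0card⟩ := Finset.exists_subset_card_eq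
    (s := (Finset.univ : Finset (Fin K)).erase ⟨0, hK0⟩) (n := κ) (by
      rw [Finset.card_erase_of_mem (Finset.mem_univ _), Finset.card_univ, Fintype.card_fin]
      exact hκ2)
  let b0 : Blk K κ := ⟨(⟨0, hK0⟩, 𝒦0), fun hc => (Finset.mem_erase.1 (h𝒦0sub hc)).1 rfl, h𝒦0card⟩
  obtain ⟨l, hl⟩ := Finset.card_pos.1 (by omega : 0 < 𝒦0.card)
  have hl0 : (⟨0, hK0⟩ : Fin K) < l := by
    have hne := (Finset.mem_erase.1 (h𝒦0sub hl)).1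
    have hlv : (l : ℕ) ≠ 0 := fun h0 => hne (Fin.ext h0)
    show (0 : ℕ) < (l : ℕ)
    omega
  set q0 : PairIdx K := ⟨(⟨0, hK0⟩, l), hl0⟩ with hq0
  have hq0b0 : inBlock b0 q0 := Or.inl ⟨rfl, hl⟩
  have hσL : σ ≤ Lmax := by
    set e : GVec K := EuclideanSpace.single q0 1 with he
    have hesupp : ∀ q, ¬ inBlock b0 q → e q = 0 := by
      intro q hq
      rw [he, EuclideanSpace.single_apply]
      split
      · next heq => exact absurd (heq ▸ hq0b0) hq
      · rfl
    have henorm : ‖e‖ = 1 := by rw [he, EuclideanSpace.norm_single, norm_one]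
    have h1 := hsmooth b0 w e hesupp
    have h2 := hsc w (w + e)
    rw [add_sub_cancel_left] at h2
    rw [henorm] at h1 h2
    have := h2.trans h1
    have hb := hLmax b0
    nlinarith
  have hLmaxpos : 0 < Lmax := lt_of_lt_of_le hσ hσL
  set g := gradient h w with hgdef
  set t : ℝ := σ / Lmax with ht
  have ht0 : 0 < t := div_pos hσ hLmaxpos
  have ht1 : t ≤ 1 := (div_le_one hLmaxpos).2 hσL
  set u : GVec K := t • (wstar - w) with hu
  have huq : ∀ q, u q = t * (wstar q - w q) := fun q => rfl
  have hufeas : ∀ q, -w q ≤ u q := by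
    intro q
    rw [huq]
    nlinarith [hw_nonneg q, hwstar_nonneg q]
  -- block bound with Lmax
  have hblk : ∀ b : Blk K κ, h (blockProxUpdate h L b w) ≤ h w +
      ∑ q ∈ Finset.univ.filter (fun q => inBlock b q),
        (u q * g q + Lmax / 2 * (u q)^2) := by
    intro b
    refine (key_block h L hLpos hsmooth b w u hufeas).trans ?_
    gcongr with q hq
    have := hLmax b
    nlinarith [sq_nonneg (u q)]
  -- sum over blocks
  set c : ℕ := 2 * (K - 2).choose (κ - 1) with hc
  set B : ℕ := Fintype.card (Blk K κ) with hB
  have hBval : B = K * (K - 1).choose κ := card_blk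
  have hBpos : 0 < B := by
    rw [hBval]
    have := Nat.choose_pos hκ2
    positivity
  have hsum : ∑ b : Blk K κ, h (blockProxUpdate h L b w)
      ≤ B * h w + c * ∑ q, (u q * g q + Lmax / 2 * (u q)^2) := by
    calc ∑ b : Blk K κ, h (blockProxUpdate h L b w)
        ≤ ∑ b : Blk K κ, (h w + ∑ q ∈ Finset.univ.filter (fun q => inBlock b q),
            (u q * g q + Lmax / 2 * (u q)^2)) := Finset.sum_le_sum (fun b _ => hblk b)
      _ = B * h w + ∑ b : Blk K κ, ∑ q ∈ Finset.univ.filter (fun q => inBlock b q),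
            (u q * g q + Lmax / 2 * (u q)^2) := by
          rw [Finset.sum_add_distrib, Finset.sum_const, Finset.card_univ, nsmul_eq_mul]
      _ = B * h w + c * ∑ q, (u q * g q + Lmax / 2 * (u q)^2) := by
          congr 1
          simp only [Finset.sum_filter]
          rw [Finset.sum_comm]
          rw [Finset.mul_sum]
          apply Finset.sum_congr rfl
          intro q _
          rw [← Finset.sum_filter, Finset.sum_const, count_inBlock hκ1 q, nsmul_eq_mul]
  -- bound the model value
  have hmodel : ∑ q, (u q * g q + Lmax / 2 * (u q)^2) ≤ t * (h wstar - h w) := by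
    have hinner : ∑ q, u q * g q = t * ⟪wstar - w, g⟫ := by
      rw [gvec_inner, Finset.mul_sum]
      apply Finset.sum_congr rfl
      intro q _
      rw [huq]
      have : (wstar - w) q = wstar q - w q := rfl
      rw [this]; ring
    have hnormsq : ∑ q, (u q)^2 = t^2 * ‖wstar - w‖^2 := by
      rw [gvec_norm_sq, Finset.mul_sum]
      apply Finset.sum_congr rfl
      intro q _
      rw [huq]
      have : (wstar - w) q = wstar q - w q := rfl
      rw [this]; ring
    have hsum2 : ∑ q, (u q * g q + Lmax / 2 * (u q)^2)
        = t * ⟪wstar - w, g⟫ + Lmax / 2 * (t^2 * ‖wstar - w‖^2) := by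
      rw [Finset.sum_add_distrib, hinner, ← Finset.mul_sum, hnormsq]
    rw [hsum2]
    have hscw := hsc w wstar
    have htL : t * Lmax = σ := by rw [ht]; field_simp
    have h1 : t * ⟪wstar - w, g⟫ ≤ t * (h wstar - h w - σ/2 * ‖wstar - w‖^2) :=
      mul_le_mul_of_nonneg_left (by linarith [hscw]) ht0.le
    have h2 : Lmax / 2 * (t^2 * ‖wstar - w‖^2) = t * (σ/2 * ‖wstar - w‖^2) := by
      rw [← htL]; ring
    linarith [h1, h2]
  -- combine
  have hmain : ∑ b : Blk K κ, h (blockProxUpdate h L b w)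
      ≤ B * h w + c * t * (h wstar - h w) := by
    refine hsum.trans ?_
    have hc0 : (0:ℝ) ≤ c := Nat.cast_nonneg c
    have := mul_le_mul_of_nonneg_left hmodel hc0
    linarith [this]
  -- the ratio identity
  have hK1 : ((K:ℝ) - 1) = ((K - 1 : ℕ) : ℝ) := by
    have h1 : (1:ℕ) ≤ K := by omega
    rw [Nat.cast_sub h1, Nat.cast_one]
  have hchoose : (K - 1) * (K - 2).choose (κ - 1) = (K - 1).choose κ * κ := by
    have h1 : K - 1 = (K - 2) + 1 := by omega
    have h2 : κ = (κ - 1) + 1 := by omega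
    rw [h1, h2]
    exact Nat.add_one_mul_choose_eq (K - 2) (κ - 1)
  have hratio : (c : ℝ) * t / B = 2 * κ * σ / (K * ((K:ℝ) - 1) * Lmax) := by
    have hKR : (0:ℝ) < (K:ℝ) := by exact_mod_cast hK0
    have hM : (0:ℝ) < ((K - 1 : ℕ) : ℝ) := by
      have : 1 ≤ K - 1 := by omega
      exact_mod_cast Nat.lt_of_lt_of_le Nat.zero_lt_one this
    have hBne : ((B:ℝ)) ≠ 0 := by positivity
    have hden : (K:ℝ) * ((K:ℝ) - 1) * Lmax ≠ 0 := by
      rw [hK1]; positivity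
    rw [div_eq_div_iff hBne hden]
    have htL : t * Lmax = σ := by rw [ht]; field_simp
    have hch : ((K - 1 : ℕ) : ℝ) * ((K - 2).choose (κ - 1) : ℝ)
        = ((K - 1).choose κ : ℝ) * (κ:ℝ) := by exact_mod_cast hchoose
    calc (c:ℝ) * t * ((K:ℝ) * ((K:ℝ) - 1) * Lmax)
        = (K:ℝ) * (((K - 1 : ℕ):ℝ) * ((K - 2).choose (κ - 1) : ℝ)) * 2 * (t * Lmax) := by
          rw [hK1, hc]; push_cast; ring
      _ = (K:ℝ) * (((K - 1).choose κ : ℝ) * (κ:ℝ)) * 2 * σ := by rw [hch, htL]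
      _ = 2 * κ * σ * B := by rw [hBval]; push_cast; ring
  -- finish
  have hBR : (0:ℝ) < B := by exact_mod_cast hBpos
  have hfin : (B:ℝ)⁻¹ * (∑ b : Blk K κ, h (blockProxUpdate h L b w)) - h wstar
      ≤ h w - h wstar + (c * t / B) * (h wstar - h w) := by
    rw [div_mul_eq_mul_div, sub_le_iff_le_add]
    rw [inv_mul_le_iff₀ hBR]
    calc ∑ b : Blk K κ, h (blockProxUpdate h L b w)
        ≤ B * h w + c * t * (h wstar - h w) := hmain
      _ = (B:ℝ) * (h w - h wstar + c * t * (h wstar - h w) / B + h wstar) := by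
          field_simp; ring
  refine hfin.trans (le_of_eq ?_)
  rw [hratio]
  ring
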